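/- arXiv:2208.01322 — 2 statements merged into one kernel-verified Lean document; each statement's English description precedes it below -/
import Mathlib

section
/- For integers 1 \le r \le n, the median m of the Beta(r, n-r+1) distribution, defined by I_m(r, n-r+1) = 1/2 where I is the regularized incomplete beta function, satisfies |m - (r - 1/3)/(n + 1/3)| < 1/(n+1) (the Hyndman-Fan approximation bound, for 2 \le r \le n-1). -/
open MeasureTheory Filter
open intervalIntegral
set_option maxHeartbeats 1000000

/-- The Beta function `B(a,b) = ∫₀¹ t^(a-1) (1-t)^(b-1) dt`. -/
noncomputable def betaFun (a b : ℝ) : ℝ :=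
  ∫ t in (0:ℝ)..1, t ^ (a - 1) * (1 - t) ^ (b - 1)

/-- The regularized incomplete beta function `I_p(a,b)`. -/
noncomputable def regIncBeta (a b p : ℝ) : ℝ :=
  (∫ t in (0:ℝ)..p, t ^ (a - 1) * (1 - t) ^ (b - 1)) / betaFun a b

noncomputable def pf (a b : ℕ) (s : ℝ) : ℝ := s ^ a * (1 - s) ^ b

lemma pf_cont (a b : ℕ) : Continuous (pf a b) := by
  unfold pf; continuity

lemma pf_intble (a b : ℕ) (x y : ℝ) : IntervalIntegrable (pf a b) volume x y :=
  (pf_cont a b).intervalIntegrable x y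

lemma pf_nonneg (a b : ℕ) {s : ℝ} (h0 : 0 ≤ s) (h1 : s ≤ 1) : 0 ≤ pf a b s := by
  unfold pf
  have : (0:ℝ) ≤ 1 - s := by linarith
  positivity

lemma pf_pos (a b : ℕ) {s : ℝ} (h0 : 0 < s) (h1 : s < 1) : 0 < pf a b s := by
  unfold pf
  have : (0:ℝ) < 1 - s := by linarith
  positivity

lemma pf_integral_pos (a b : ℕ) {x y : ℝ} (h0 : 0 ≤ x) (hxy : x < y) (h1 : y ≤ 1) :
    0 < ∫ s in x..y, pf a b s := by
  apply intervalIntegral_pos_of_pos_on (pf_intble a b x y)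
  · intro s hs
    exact pf_pos a b (lt_of_le_of_lt h0 hs.1) (lt_of_lt_of_le hs.2 h1)
  · exact hxy

lemma pf_integral_nonneg (a b : ℕ) {x y : ℝ} (h0 : 0 ≤ x) (hxy : x ≤ y) (h1 : y ≤ 1) :
    0 ≤ ∫ s in x..y, pf a b s := by
  apply intervalIntegral.integral_nonneg hxy
  intro s hs
  exact pf_nonneg a b (le_trans h0 hs.1) (le_trans hs.2 h1)

/-- splitting -/
lemma pf_split (a b : ℕ) (x : ℝ) :
    (∫ s in (0:ℝ)..x, pf a b s) + ∫ s in x..1, pf a b s = ∫ s in (0:ℝ)..1, pf a b s :=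
  integral_add_adjacent_intervals (pf_intble a b 0 x) (pf_intble a b x 1)

lemma J_rec (a b : ℕ) :
    (∫ s in (0:ℝ)..1, pf (a+1) b s) =
      ((a:ℝ)+1)/((a:ℝ)+b+2) * ∫ s in (0:ℝ)..1, pf a b s := by
  have hb : ((b:ℝ)+1) ≠ 0 := by positivity
  have key : (∫ x in (0:ℝ)..1, x^(a+1) * (1-x)^b)
      = ((a:ℝ)+1)/((b:ℝ)+1) * ∫ x in (0:ℝ)..1, x^a * (1-x)^(b+1) := by
    have hu : ∀ x ∈ Set.uIcc (0:ℝ) 1, HasDerivAt (fun s : ℝ => s^(a+1)) (((a:ℝ)+1) * x^a) x := by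
      intro x _
      simpa using (hasDerivAt_pow (a+1) x)
    have hv : ∀ x ∈ Set.uIcc (0:ℝ) 1,
        HasDerivAt (fun s : ℝ => -(1-s)^(b+1)/((b:ℝ)+1)) ((1-x)^b) x := by
      intro x _
      have h1 : HasDerivAt (fun s : ℝ => (1-s)) (-1) x := by
        simpa using (hasDerivAt_id x).const_sub 1
      have h2 : HasDerivAt (fun s : ℝ => (1-s)^(b+1))
          ((((b:ℕ)+1 : ℕ):ℝ) * (1-x)^b * (-1)) x :=
        (hasDerivAt_pow (b+1) (1-x)).comp x h1
      have h3 := (h2.neg.div_const ((b:ℝ)+1))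
      convert h3 using 1
      · rfl
      · rfl
      · rfl
      push_cast
      rw [eq_div_iff hb]; ring
    have hu' : IntervalIntegrable (fun x : ℝ => ((a:ℝ)+1) * x^a) volume 0 1 :=
      (by continuity : Continuous fun x : ℝ => ((a:ℝ)+1) * x^a).intervalIntegrable 0 1
    have hv' : IntervalIntegrable (fun x : ℝ => (1-x)^b) volume 0 1 :=
      (by continuity : Continuous fun x : ℝ => (1-x)^b).intervalIntegrable 0 1
    have := integral_mul_deriv_eq_deriv_mul hu hv hu' hv'
    simp only [one_pow, zero_pow (Nat.succ_ne_zero a)] at this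
    rw [this]
    have : (∫ x in (0:ℝ)..1, ((a:ℝ)+1) * x^a * (-(1-x)^(b+1)/((b:ℝ)+1)))
        = -(((a:ℝ)+1)/((b:ℝ)+1)) * ∫ x in (0:ℝ)..1, x^a * (1-x)^(b+1) := by
      rw [← intervalIntegral.integral_const_mul]
      apply intervalIntegral.integral_congr
      intro x _
      field_simp
    rw [this]
    ring
  have expand : (∫ x in (0:ℝ)..1, x^a * (1-x)^(b+1))
      = (∫ x in (0:ℝ)..1, x^a * (1-x)^b) - ∫ x in (0:ℝ)..1, x^(a+1) * (1-x)^b := by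
    rw [← intervalIntegral.integral_sub
      ((by continuity : Continuous fun x : ℝ => x^a * (1-x)^b).intervalIntegrable 0 1)
      ((by continuity : Continuous fun x : ℝ => x^(a+1) * (1-x)^b).intervalIntegrable 0 1)]
    apply intervalIntegral.integral_congr
    intro x _
    ring
  unfold pf
  have hab : ((a:ℝ)+(b:ℝ)+2) ≠ 0 := by positivity
  rw [expand] at key
  rw [div_mul_eq_mul_div, eq_div_iff hab]
  rw [div_mul_eq_mul_div, eq_div_iff hb] at key
  linear_combination key

lemma mean_id (a b : ℕ) :
    (∫ s in (0:ℝ)..1, (((a:ℝ)+1)/((a:ℝ)+b+2) - s) * pf a b s) = 0 := by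
  have h1 : (∫ s in (0:ℝ)..1, (((a:ℝ)+1)/((a:ℝ)+b+2) - s) * pf a b s)
      = (((a:ℝ)+1)/((a:ℝ)+b+2)) * (∫ s in (0:ℝ)..1, pf a b s)
        - ∫ s in (0:ℝ)..1, pf (a+1) b s := by
    rw [← intervalIntegral.integral_const_mul, ← intervalIntegral.integral_sub
      ((by exact (continuous_const.mul (pf_cont a b)) :
        Continuous fun s : ℝ => (((a:ℝ)+1)/((a:ℝ)+b+2)) * pf a b s).intervalIntegrable 0 1)
      (pf_intble (a+1) b 0 1)]
    apply intervalIntegral.integral_congr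
    intro x _
    unfold pf
    ring
  rw [h1, J_rec a b]
  ring

noncomputable def G (a b : ℕ) (x t : ℝ) : ℝ :=
  a * Real.log (x+t) + b * Real.log (1-x-t) - a * Real.log (x-t) - b * Real.log (1-x+t)

noncomputable def Gder (a b : ℕ) (x t : ℝ) : ℝ :=
  a/(x+t) - b/(1-x-t) + (a/(x-t) - b/(1-x+t))

lemma G_hasDeriv (a b : ℕ) (x t : ℝ) (h1 : 0 < x+t) (h2 : 0 < 1-x-t)
    (h3 : 0 < x-t) (h4 : 0 < 1-x+t) :
    HasDerivAt (G a b x) (Gder a b x t) t := by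
  have d1 : HasDerivAt (fun t : ℝ => Real.log (x+t)) (1/(x+t)) t := by
    have := (Real.hasDerivAt_log h1.ne').comp t ((hasDerivAt_id t).const_add x)
    simpa [one_div, Function.comp_def] using this
  have d2 : HasDerivAt (fun t : ℝ => Real.log (1-x-t)) (-(1/(1-x-t))) t := by
    have hlin : HasDerivAt (fun t : ℝ => 1-x-t) (-1) t := by
      simpa using ((hasDerivAt_id t).const_sub (1-x))
    have := (Real.hasDerivAt_log h2.ne').comp t hlin
    simpa [one_div, Function.comp_def] using this
  have d3 : HasDerivAt (fun t : ℝ => Real.log (x-t)) (-(1/(x-t))) t := by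
    have hlin : HasDerivAt (fun t : ℝ => x-t) (-1) t := by
      simpa using ((hasDerivAt_id t).const_sub x)
    have := (Real.hasDerivAt_log h3.ne').comp t hlin
    simpa [one_div, Function.comp_def] using this
  have d4 : HasDerivAt (fun t : ℝ => Real.log (1-x+t)) (1/(1-x+t)) t := by
    have := (Real.hasDerivAt_log h4.ne').comp t ((hasDerivAt_id t).const_add (1-x))
    simpa [one_div, Function.comp_def] using this
  have := (((d1.const_mul (a:ℝ)).add (d2.const_mul (b:ℝ))).sub
    (d3.const_mul (a:ℝ))).sub (d4.const_mul (b:ℝ))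
  convert this using 1
  · rfl
  · rfl
  · rfl
  unfold Gder
  field_simp
  ring

lemma G_zero (a b : ℕ) (x : ℝ) : G a b x 0 = 0 := by
  unfold G; ring_nf

lemma G_contOn (a b : ℕ) {x c d : ℝ} (hc : 0 ≤ c) (hx : 0 < x) (hd : d < x) (hx2 : x ≤ 1/2) :
    ContinuousOn (G a b x) (Set.Icc c d) := by
  have h1 : ∀ t ∈ Set.Icc c d, x + t ≠ 0 := fun t ht => by
    have := ht.1; nlinarith [ht.1]
  have h2 : ∀ t ∈ Set.Icc c d, 1-x-t ≠ 0 := fun t ht => by nlinarith [ht.2]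
  have h3 : ∀ t ∈ Set.Icc c d, x-t ≠ 0 := fun t ht => by nlinarith [ht.2]
  have h4 : ∀ t ∈ Set.Icc c d, 1-x+t ≠ 0 := fun t ht => by nlinarith [ht.1]
  have c1 : Continuous fun t : ℝ => x + t := by continuity
  have c2 : Continuous fun t : ℝ => 1 - x - t := by continuity
  have c3 : Continuous fun t : ℝ => x - t := by continuity
  have c4 : Continuous fun t : ℝ => 1 - x + t := by continuity
  unfold G
  exact (((continuousOn_const.mul ((c1.continuousOn).log h1)).add
    (continuousOn_const.mul ((c2.continuousOn).log h2))).sub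
    (continuousOn_const.mul ((c3.continuousOn).log h3))).sub
    (continuousOn_const.mul ((c4.continuousOn).log h4))

lemma G_pos_facts {x c d t : ℝ} (hc : 0 ≤ c) (hx : 0 < x) (hd : d < x) (hx2 : x ≤ 1/2)
    (ht : t ∈ Set.Ioo c d) : 0 < x+t ∧ 0 < 1-x-t ∧ 0 < x-t ∧ 0 < 1-x+t := by
  obtain ⟨h1, h2⟩ := ht
  refine ⟨by linarith, by linarith, by linarith, by linarith⟩

lemma G_monoOn (a b : ℕ) {x c d : ℝ} (hc : 0 ≤ c) (hx : 0 < x) (hd : d < x) (hx2 : x ≤ 1/2)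
    (hsign : ∀ t ∈ Set.Ioo c d, 0 ≤ Gder a b x t) :
    MonotoneOn (G a b x) (Set.Icc c d) := by
  apply monotoneOn_of_deriv_nonneg (convex_Icc c d) (G_contOn a b hc hx hd hx2)
  · rw [interior_Icc]
    intro t ht
    obtain ⟨h1, h2, h3, h4⟩ := G_pos_facts hc hx hd hx2 ht
    exact (G_hasDeriv a b x t h1 h2 h3 h4).differentiableAt.differentiableWithinAt
  · rw [interior_Icc]
    intro t ht
    obtain ⟨h1, h2, h3, h4⟩ := G_pos_facts hc hx hd hx2 ht
    rw [(G_hasDeriv a b x t h1 h2 h3 h4).deriv]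
    exact hsign t ht

lemma G_antiOn (a b : ℕ) {x c d : ℝ} (hc : 0 ≤ c) (hx : 0 < x) (hd : d < x) (hx2 : x ≤ 1/2)
    (hsign : ∀ t ∈ Set.Ioo c d, Gder a b x t ≤ 0) :
    AntitoneOn (G a b x) (Set.Icc c d) := by
  apply antitoneOn_of_deriv_nonpos (convex_Icc c d) (G_contOn a b hc hx hd hx2)
  · rw [interior_Icc]
    intro t ht
    obtain ⟨h1, h2, h3, h4⟩ := G_pos_facts hc hx hd hx2 ht
    exact (G_hasDeriv a b x t h1 h2 h3 h4).differentiableAt.differentiableWithinAt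
  · rw [interior_Icc]
    intro t ht
    obtain ⟨h1, h2, h3, h4⟩ := G_pos_facts hc hx hd hx2 ht
    rw [(G_hasDeriv a b x t h1 h2 h3 h4).deriv]
    exact hsign t ht

lemma log_pf {a b : ℕ} {s : ℝ} (h0 : 0 < s) (h1 : s < 1) :
    Real.log (pf a b s) = a * Real.log s + b * Real.log (1-s) := by
  unfold pf
  have h1s : (0:ℝ) < 1 - s := by linarith
  rw [Real.log_mul (by positivity) (by positivity : ((1:ℝ)-s)^b ≠ 0),
    Real.log_pow, Real.log_pow]

/-- comparison via G : for `0 ≤ t < x`, `x + t < 1` :  `pf (x-t) ≤ pf (x+t) ↔ 0 ≤ G t` -/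
lemma pf_le_iff_G {a b : ℕ} {x t : ℝ} (ht0 : 0 ≤ t) (htx : t < x) (hxt1 : x + t < 1) :
    (pf a b (x-t) ≤ pf a b (x+t) ↔ 0 ≤ G a b x t) := by
  have p1 : 0 < x - t := by linarith
  have p2 : x - t < 1 := by linarith
  have p3 : 0 < x + t := by linarith
  have hiff : pf a b (x-t) ≤ pf a b (x+t) ↔
      Real.log (pf a b (x-t)) ≤ Real.log (pf a b (x+t)) :=
    (Real.log_le_log_iff (pf_pos a b p1 p2) (pf_pos a b p3 hxt1)).symm
  rw [hiff, log_pf p1 p2, log_pf p3 hxt1]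
  unfold G
  rw [show (1:ℝ)-(x-t) = 1-x+t by ring, show (1:ℝ)-(x+t) = 1-x-t by ring]
  constructor <;> intro h <;> linarith

lemma Gder_eq (a b : ℕ) {x t : ℝ} (h1 : 0 < x+t) (h2 : 0 < 1-x-t)
    (h3 : 0 < x-t) (h4 : 0 < 1-x+t) :
    Gder a b x t = 2*((a:ℝ)*x*((1-x)^2-t^2) - b*(1-x)*(x^2-t^2))
      / ((x^2-t^2)*((1-x)^2-t^2)) := by
  have e1 : x^2 - t^2 = (x+t)*(x-t) := by ring
  have e2 : (1-x)^2 - t^2 = (1-x-t)*(1-x+t) := by ring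
  unfold Gder
  rw [e1, e2]
  field_simp
  ring

/-- P1 : pointwise reflection inequality at the mode `M = a/(a+b)`. -/
lemma pf_reflect_mode {a b : ℕ} (ha : 1 ≤ a) (hab : a ≤ b) {t : ℝ}
    (ht0 : 0 ≤ t) (htM : t ≤ (a:ℝ)/((a:ℝ)+b)) :
    pf a b ((a:ℝ)/((a:ℝ)+b) - t) ≤ pf a b ((a:ℝ)/((a:ℝ)+b) + t) := by
  set M : ℝ := (a:ℝ)/((a:ℝ)+b) with hMdef
  have hb : 1 ≤ b := le_trans ha hab
  have hapb : (0:ℝ) < (a:ℝ)+b := by positivity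
  have haR : (1:ℝ) ≤ (a:ℝ) := by exact_mod_cast ha
  have habR : (a:ℝ) ≤ (b:ℝ) := by exact_mod_cast hab
  have hM0 : 0 < M := by positivity
  have hM2 : M ≤ 1/2 := by
    rw [hMdef, div_le_iff₀ hapb]; linarith
  have hMeq : M * ((a:ℝ)+b) = a := by
    rw [hMdef]; field_simp
  by_cases htx : t < M
  · rw [pf_le_iff_G ht0 htx (by linarith)]
    have hmono : MonotoneOn (G a b M) (Set.Icc 0 t) := by
      apply G_monoOn a b le_rfl hM0 htx hM2
      intro s hs
      have p1 : 0 < M+s := by linarith [hs.1]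
      have p2 : 0 < 1-M-s := by linarith [hs.2]
      have p3 : 0 < M-s := by linarith [hs.2]
      have p4 : 0 < 1-M+s := by linarith [hs.1]
      rw [Gder_eq a b p1 p2 p3 p4]
      have hden : 0 < (M^2-s^2)*((1-M)^2-s^2) := by
        have := mul_pos (mul_pos p1 p3) (mul_pos p2 p4)
        nlinarith [this]
      apply div_nonneg _ hden.le
      have hnum : (a:ℝ)*M*((1-M)^2-s^2) - b*(1-M)*(M^2-s^2)
          = ((a:ℝ)+b)*s^2*(1-2*M) := by
        linear_combination (s^2 - M + M^2) * hMeq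
      rw [hnum]
      nlinarith [sq_nonneg s]
    have h0t : G a b M 0 ≤ G a b M t :=
      hmono (Set.mem_Icc.2 ⟨le_rfl, ht0⟩) (Set.mem_Icc.2 ⟨ht0, le_rfl⟩) ht0
    rw [G_zero] at h0t
    exact h0t
  · have htM' : t = M := le_antisymm htM (not_lt.1 htx)
    rw [htM']
    have : M - M = 0 := by ring
    rw [this]
    have hpf0 : pf a b 0 = 0 := by
      unfold pf
      rw [zero_pow (by omega : a ≠ 0)]
      ring
    rw [hpf0]
    exact pf_nonneg a b (by linarith) (by linarith)

lemma lower_half {a b : ℕ} (ha : 1 ≤ a) (hab : a ≤ b) :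
    2 * (∫ s in (0:ℝ)..((a:ℝ)/((a:ℝ)+b)), pf a b s) ≤ ∫ s in (0:ℝ)..1, pf a b s := by
  set M : ℝ := (a:ℝ)/((a:ℝ)+b) with hMdef
  have hapb : (0:ℝ) < (a:ℝ)+b := by positivity
  have haR : (1:ℝ) ≤ (a:ℝ) := by exact_mod_cast ha
  have habR : (a:ℝ) ≤ (b:ℝ) := by exact_mod_cast hab
  have hM0 : 0 < M := by positivity
  have hM2 : M ≤ 1/2 := by rw [hMdef, div_le_iff₀ hapb]; linarith
  have e1 : (∫ s in (0:ℝ)..M, pf a b s) = ∫ t in (0:ℝ)..M, pf a b (M - t) := by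
    rw [intervalIntegral.integral_comp_sub_left (pf a b) M]
    norm_num
  have e2 : (∫ t in (0:ℝ)..M, pf a b (M + t)) = ∫ s in M..(M+M), pf a b s := by
    rw [intervalIntegral.integral_comp_add_left (pf a b) M]
    norm_num
  have step1 : (∫ t in (0:ℝ)..M, pf a b (M - t)) ≤ ∫ t in (0:ℝ)..M, pf a b (M + t) := by
    apply intervalIntegral.integral_mono_on hM0.le
    · exact ((pf_cont a b).comp (by continuity)).intervalIntegrable 0 M
    · exact ((pf_cont a b).comp (by continuity)).intervalIntegrable 0 M
    · intro t ht
      exact pf_reflect_mode ha hab ht.1 ht.2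
  have step2 : (∫ s in M..(M+M), pf a b s) ≤ ∫ s in M..1, pf a b s := by
    apply intervalIntegral.integral_mono_interval le_rfl (by linarith) (by linarith)
    · apply (ae_restrict_iff' measurableSet_Ioc).mpr
      apply ae_of_all
      intro s hs
      exact pf_nonneg a b (by linarith [hs.1]) hs.2
    · exact pf_intble a b M 1
  have hsplit := pf_split a b M
  linarith [e1, e2, step1, step2, hsplit]

/-- reverse comparison -/
lemma pf_ge_iff_G {a b : ℕ} {x t : ℝ} (ht0 : 0 ≤ t) (htx : t < x) (hxt1 : x + t < 1) :
    (pf a b (x+t) ≤ pf a b (x-t) ↔ G a b x t ≤ 0) := by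
  have p1 : 0 < x - t := by linarith
  have p2 : x - t < 1 := by linarith
  have p3 : 0 < x + t := by linarith
  have hiff : pf a b (x+t) ≤ pf a b (x-t) ↔
      Real.log (pf a b (x+t)) ≤ Real.log (pf a b (x-t)) :=
    (Real.log_le_log_iff (pf_pos a b p3 hxt1) (pf_pos a b p1 p2)).symm
  rw [hiff, log_pf p1 p2, log_pf p3 hxt1]
  unfold G
  rw [show (1:ℝ)-(x-t) = 1-x+t by ring, show (1:ℝ)-(x+t) = 1-x-t by ring]
  constructor <;> intro h <;> linarith

lemma upper_half_lt {a b : ℕ} (ha : 1 ≤ a) (hab : a < b) :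
    (∫ s in (0:ℝ)..1, pf a b s) ≤
      2 * ∫ s in (0:ℝ)..(((a:ℝ)+1)/((a:ℝ)+b+2)), pf a b s := by
  set μ : ℝ := ((a:ℝ)+1)/((a:ℝ)+b+2) with hμdef
  set K : ℝ := (a:ℝ)+b+2 with hKdef
  have haR : (1:ℝ) ≤ (a:ℝ) := by exact_mod_cast ha
  have habR : (a:ℝ) < (b:ℝ) := by exact_mod_cast hab
  have hK0 : (0:ℝ) < K := by positivity
  have hμ0 : 0 < μ := by positivity
  have hμeq : μ * K = (a:ℝ)+1 := by rw [hμdef]; field_simp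
  have hμhalf : μ < 1/2 := by rw [hμdef, div_lt_iff₀ (by positivity)]; linarith
  have haK : (a:ℝ) = μ*K - 1 := by linear_combination -hμeq
  have hbK : (b:ℝ) = (1-μ)*K - 1 := by rw [hKdef] at hμeq ⊢; linarith
  clear_value K μ
  -- the inflection radius t₀
  set t₀ : ℝ := Real.sqrt (μ*(1-μ)/(K-1)) with ht₀def
  have hK1 : (1:ℝ) < K - 1 := by rw [hKdef]; linarith
  have harg : 0 < μ*(1-μ)/(K-1) := by
    apply div_pos (by nlinarith) (by linarith)
  have ht₀0 : 0 < t₀ := Real.sqrt_pos.2 harg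
  have ht₀sq : t₀^2 = μ*(1-μ)/(K-1) := Real.sq_sqrt harg.le
  have ht₀μ : t₀ < μ := by
    rw [ht₀def]
    apply (Real.sqrt_lt' hμ0).2
    rw [div_lt_iff₀ (by linarith)]
    nlinarith
  clear_value t₀
  -- sign of Gder at center μ
  have hGder : ∀ s : ℝ, 0 < s → s < μ →
      Gder a b μ s = 2*((1-2*μ)*((K-1)*s^2 - μ*(1-μ))) / ((μ^2-s^2)*((1-μ)^2-s^2)) := by
    intro s hs0 hsμ
    have p1 : 0 < μ+s := by linarith
    have p2 : 0 < 1-μ-s := by linarith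
    have p3 : 0 < μ-s := by linarith
    have p4 : 0 < 1-μ+s := by linarith
    rw [Gder_eq a b p1 p2 p3 p4]
    congr 1
    linear_combination (2*μ*((1-μ)^2-s^2)) * haK - (2*(1-μ)*(μ^2-s^2)) * hbK
  have hden_pos : ∀ s : ℝ, 0 < s → s < μ → 0 < (μ^2-s^2)*((1-μ)^2-s^2) := by
    intro s hs0 hsμ
    have p2 : 0 < 1-μ-s := by linarith
    have p4 : 0 < 1-μ+s := by linarith
    have p1 : 0 < μ+s := by linarith
    have p3 : 0 < μ-s := by linarith
    have e : (μ^2-s^2)*((1-μ)^2-s^2) = ((μ+s)*(μ-s))*((1-μ-s)*(1-μ+s)) := by ring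
    rw [e]
    exact mul_pos (mul_pos p1 p3) (mul_pos p2 p4)
  -- G is antitone on [0,t₀], monotone on [t₀, t'] for t' < μ
  have hanti : AntitoneOn (G a b μ) (Set.Icc 0 t₀) := by
    apply G_antiOn a b le_rfl hμ0 ht₀μ (by linarith)
    intro s hs
    have hsμ : s < μ := lt_trans hs.2 ht₀μ
    rw [hGder s hs.1 hsμ]
    apply div_nonpos_of_nonpos_of_nonneg _ (hden_pos s hs.1 hsμ).le
    have hs2 : (K-1)*s^2 - μ*(1-μ) ≤ 0 := by
      have h1 : s^2 < t₀^2 := by nlinarith [hs.1, hs.2]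
      rw [ht₀sq] at h1
      have h2 := (lt_div_iff₀ (by linarith : (0:ℝ) < K-1)).1 h1
      nlinarith
    nlinarith
  have hmono : ∀ t' : ℝ, t₀ ≤ t' → t' < μ → MonotoneOn (G a b μ) (Set.Icc t₀ t') := by
    intro t' ht₀t' ht'μ
    apply G_monoOn a b ht₀0.le hμ0 ht'μ (by linarith)
    intro s hs
    have hsμ : s < μ := lt_trans hs.2 ht'μ
    have hs0 : 0 < s := lt_trans ht₀0 hs.1
    rw [hGder s hs0 hsμ]
    apply div_nonneg _ (hden_pos s hs0 hsμ).le
    have hs2 : 0 ≤ (K-1)*s^2 - μ*(1-μ) := by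
      have h1 : t₀^2 ≤ s^2 := by nlinarith [hs.1, ht₀0]
      rw [ht₀sq] at h1
      rw [div_le_iff₀ (by linarith : (0:ℝ) < K-1)] at h1
      nlinarith
    nlinarith
  -- the crossing point t₁
  set D : ℝ → ℝ := fun t => pf a b (μ-t) - pf a b (μ+t) with hDdef
  clear_value D
  have hDcont : Continuous D := by
    rw [hDdef]
    exact ((pf_cont a b).comp (continuous_const.sub continuous_id)).sub
      ((pf_cont a b).comp (continuous_const.add continuous_id))
  have hDt₀ : 0 ≤ D t₀ := by
    have hG : G a b μ t₀ ≤ 0 := by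
      have := hanti (Set.mem_Icc.2 ⟨le_rfl, ht₀0.le⟩) (Set.mem_Icc.2 ⟨ht₀0.le, le_rfl⟩) ht₀0.le
      rwa [G_zero] at this
    have := (pf_ge_iff_G (a := a) (b := b) ht₀0.le ht₀μ (by linarith)).2 hG
    simp only [hDdef]
    linarith [this]
  have hDμ : D μ < 0 := by
    simp only [hDdef]
    have h0 : pf a b (μ-μ) = 0 := by
      rw [show μ - μ = (0:ℝ) by ring]
      unfold pf
      rw [zero_pow (by omega : a ≠ 0)]; ring
    rw [h0]
    have : 0 < pf a b (μ+μ) := pf_pos a b (by linarith) (by linarith)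
    linarith
  obtain ⟨t₁, ht₁mem, hDt₁⟩ : ∃ t₁ ∈ Set.Icc t₀ μ, D t₁ = 0 := by
    have : (0:ℝ) ∈ Set.Icc (D μ) (D t₀) := Set.mem_Icc.2 ⟨hDμ.le, hDt₀⟩
    have := intermediate_value_Icc' ht₀μ.le hDcont.continuousOn this
    obtain ⟨t₁, h1, h2⟩ := this
    exact ⟨t₁, h1, h2⟩
  have ht₁μ : t₁ < μ := by
    rcases lt_or_eq_of_le ht₁mem.2 with h | h
    · exact h
    · exfalso; rw [h] at hDt₁; rw [hDt₁] at hDμ; exact lt_irrefl 0 hDμ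
  have ht₁0 : 0 < t₁ := lt_of_lt_of_le ht₀0 ht₁mem.1
  have hGt₁ : G a b μ t₁ = 0 := by
    have h1 := (pf_ge_iff_G (a := a) (b := b) (by linarith) ht₁μ (by linarith))
    have h2 := (pf_le_iff_G (a := a) (b := b) (x := μ) (t := t₁) (by linarith) ht₁μ (by linarith))
    simp only [hDdef] at hDt₁
    have e : pf a b (μ-t₁) = pf a b (μ+t₁) := by linarith
    have ha1 : G a b μ t₁ ≤ 0 := h1.1 (le_of_eq e.symm)
    have ha2 : 0 ≤ G a b μ t₁ := h2.1 (le_of_eq e)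
    linarith
  -- pointwise sign claims
  have C1 : ∀ t ∈ Set.Icc (0:ℝ) t₁, 0 ≤ D t := by
    intro t ht
    have htμ : t < μ := lt_of_le_of_lt ht.2 ht₁μ
    have hG : G a b μ t ≤ 0 := by
      rcases le_or_gt t t₀ with h | h
      · have := hanti (Set.mem_Icc.2 ⟨le_rfl, ht₀0.le⟩) (Set.mem_Icc.2 ⟨ht.1, h⟩) ht.1
        rwa [G_zero] at this
      · have := hmono t₁ ht₁mem.1 ht₁μ (Set.mem_Icc.2 ⟨h.le, ht.2⟩)
          (Set.mem_Icc.2 ⟨ht₁mem.1, le_rfl⟩) ht.2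
        rw [hGt₁] at this
        linarith [this]
    have := (pf_ge_iff_G (a := a) (b := b) ht.1 htμ (by linarith)).2 hG
    simp only [hDdef]
    linarith [this]
  have C2 : ∀ t ∈ Set.Icc t₁ μ, D t ≤ 0 := by
    intro t ht
    rcases lt_or_eq_of_le ht.2 with htμ | htμ
    · have hG : 0 ≤ G a b μ t := by
        have := hmono t (le_trans ht₁mem.1 ht.1) htμ
          (Set.mem_Icc.2 ⟨ht₁mem.1, ht.1⟩) (Set.mem_Icc.2 ⟨le_trans ht₁mem.1 ht.1, le_rfl⟩) ht.1
        rw [hGt₁] at this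
        linarith [this]
      have := (pf_le_iff_G (a := a) (b := b) (by linarith [ht₁0, ht.1]) htμ (by linarith)).2 hG
      simp only [hDdef]
      linarith [this]
    · rw [htμ]; exact hDμ.le
  -- ===== integral assembly =====
  have hμ1 : μ < 1 := by linarith
  have hsplit := pf_split a b μ
  have hwt : Continuous fun t : ℝ => 1 - t/t₁ :=
    continuous_const.sub (continuous_id.div_const t₁)
  have hw1 : Continuous fun s : ℝ => (1 - (μ-s)/t₁) * pf a b s :=
    (continuous_const.sub ((continuous_const.sub continuous_id).div_const t₁)).mul (pf_cont a b)
  have hw2 : Continuous fun s : ℝ => (1 - (s-μ)/t₁) * pf a b s :=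
    (continuous_const.sub ((continuous_id.sub continuous_const).div_const t₁)).mul (pf_cont a b)
  have hw3 : Continuous fun s : ℝ => (μ-s) * pf a b s :=
    (continuous_const.sub continuous_id).mul (pf_cont a b)
  have hw5 : Continuous fun t : ℝ => (1 - t/t₁) * pf a b (μ+t) :=
    hwt.mul ((pf_cont a b).comp (continuous_const.add continuous_id))
  have hw6 : Continuous fun t : ℝ => (1 - t/t₁) * pf a b (μ-t) :=
    hwt.mul ((pf_cont a b).comp (continuous_const.sub continuous_id))
  have hP : (∫ s in (0:ℝ)..μ, pf a b s)
      = (∫ s in (0:ℝ)..μ, (1 - (μ-s)/t₁) * pf a b s)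
        + (1/t₁) * ∫ s in (0:ℝ)..μ, (μ-s) * pf a b s := by
    rw [← intervalIntegral.integral_const_mul, ← intervalIntegral.integral_add
      (hw1.intervalIntegrable 0 μ) ((show Continuous fun s => (1/t₁) * ((μ-s) * pf a b s) from continuous_const.mul hw3).intervalIntegrable 0 μ)]
    apply intervalIntegral.integral_congr
    intro s _
    simp only
    field_simp
    ring
  have hQ : (∫ s in μ..1, pf a b s)
      = (∫ s in μ..1, (1 - (s-μ)/t₁) * pf a b s)
        - (1/t₁) * ∫ s in μ..1, (μ-s) * pf a b s := by
    rw [← intervalIntegral.integral_const_mul, ← intervalIntegral.integral_sub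
      (hw2.intervalIntegrable μ 1) ((show Continuous fun s => (1/t₁) * ((μ-s) * pf a b s) from continuous_const.mul hw3).intervalIntegrable μ 1)]
    apply intervalIntegral.integral_congr
    intro s _
    simp only
    field_simp
    ring
  have hmean : (∫ s in (0:ℝ)..μ, (μ-s) * pf a b s) + (∫ s in μ..1, (μ-s) * pf a b s) = 0 := by
    rw [intervalIntegral.integral_add_adjacent_intervals (hw3.intervalIntegrable 0 μ)
      (hw3.intervalIntegrable μ 1)]
    rw [hμdef, hKdef]
    exact mean_id a b
  have hmean2 : (1/t₁) * (∫ s in (0:ℝ)..μ, (μ-s) * pf a b s)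
      + (1/t₁) * (∫ s in μ..1, (μ-s) * pf a b s) = 0 := by
    rw [← mul_add, hmean, mul_zero]
  have hPrefl : (∫ t in (0:ℝ)..μ, (1 - t/t₁) * pf a b (μ-t))
      = ∫ s in (0:ℝ)..μ, (1 - (μ-s)/t₁) * pf a b s := by
    have e : ∀ t ∈ Set.uIcc (0:ℝ) μ, (1 - t/t₁) * pf a b (μ-t)
        = (fun s => (1 - (μ-s)/t₁) * pf a b s) (μ - t) := by
      intro t _
      simp only
      ring_nf
    rw [intervalIntegral.integral_congr e,
      intervalIntegral.integral_comp_sub_left (fun s => (1 - (μ-s)/t₁) * pf a b s) μ]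
    norm_num
  have hQrefl : (∫ t in (0:ℝ)..(1-μ), (1 - t/t₁) * pf a b (μ+t))
      = ∫ s in μ..1, (1 - (s-μ)/t₁) * pf a b s := by
    have e : ∀ t ∈ Set.uIcc (0:ℝ) (1-μ), (1 - t/t₁) * pf a b (μ+t)
        = (fun s => (1 - (s-μ)/t₁) * pf a b s) (μ + t) := by
      intro t _
      simp only
      ring_nf
    rw [intervalIntegral.integral_congr e,
      intervalIntegral.integral_comp_add_left (fun s => (1 - (s-μ)/t₁) * pf a b s) μ]
    rw [show μ + (1-μ) = (1:ℝ) by ring, show μ + 0 = μ by ring]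
  have hQsplit : (∫ t in (0:ℝ)..(1-μ), (1 - t/t₁) * pf a b (μ+t))
      = (∫ t in (0:ℝ)..μ, (1 - t/t₁) * pf a b (μ+t))
        + ∫ t in μ..(1-μ), (1 - t/t₁) * pf a b (μ+t) :=
    (intervalIntegral.integral_add_adjacent_intervals
      (hw5.intervalIntegrable 0 μ) (hw5.intervalIntegrable μ (1-μ))).symm
  have htail' : 0 ≤ ∫ t in μ..(1-μ), (t/t₁ - 1) * pf a b (μ+t) := by
    apply intervalIntegral.integral_nonneg (by linarith : μ ≤ 1-μ)
    intro u hu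
    have h1 : 0 ≤ u/t₁ - 1 := by
      rw [sub_nonneg, le_div_iff₀ ht₁0]
      nlinarith [hu.1]
    have h2 : 0 ≤ pf a b (μ+u) := pf_nonneg a b (by linarith [hu.1]) (by linarith [hu.2])
    positivity
  have htail : (∫ t in μ..(1-μ), (1 - t/t₁) * pf a b (μ+t)) ≤ 0 := by
    have e : (∫ t in μ..(1-μ), (1 - t/t₁) * pf a b (μ+t))
        = - ∫ t in μ..(1-μ), (t/t₁ - 1) * pf a b (μ+t) := by
      rw [← intervalIntegral.integral_neg]
      apply intervalIntegral.integral_congr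
      intro u _
      simp only
      ring
    rw [e]
    linarith
  have hmain : (∫ t in (0:ℝ)..μ, (1 - t/t₁) * pf a b (μ+t))
      ≤ ∫ t in (0:ℝ)..μ, (1 - t/t₁) * pf a b (μ-t) := by
    apply intervalIntegral.integral_mono_on hμ0.le (hw5.intervalIntegrable 0 μ)
      (hw6.intervalIntegrable 0 μ)
    intro t ht
    rcases le_or_gt t t₁ with h | h
    · have hD := C1 t ⟨ht.1, h⟩
      have hw : 0 ≤ 1 - t/t₁ := by
        rw [sub_nonneg, div_le_one ht₁0]; exact h
      simp only [hDdef] at hD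
      nlinarith
    · have hD := C2 t ⟨h.le, ht.2⟩
      have hw : 1 - t/t₁ ≤ 0 := by
        rw [sub_nonpos, one_le_div ht₁0]; exact h.le
      simp only [hDdef] at hD
      nlinarith
  linarith [hP, hQ, hPrefl, hQrefl, hQsplit, htail, hmain, hmean2, hsplit]

lemma pf_swap (a b : ℕ) (s : ℝ) : pf b a (1 - s) = pf a b s := by
  unfold pf
  rw [show (1:ℝ) - (1 - s) = s by ring]
  ring

lemma refl_int (a b : ℕ) (x y : ℝ) :
    (∫ s in x..y, pf b a s) = ∫ s in (1-y)..(1-x), pf a b s := by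
  rw [← intervalIntegral.integral_comp_sub_left (pf a b) 1]
  apply intervalIntegral.integral_congr
  intro s _
  show pf b a s = pf a b (1 - s)
  rw [← pf_swap a b (1-s), show (1:ℝ) - (1 - s) = s by ring]

lemma upper_half {a b : ℕ} (ha : 1 ≤ a) (hab : a ≤ b) :
    (∫ s in (0:ℝ)..1, pf a b s) ≤
      2 * ∫ s in (0:ℝ)..(((a:ℝ)+1)/((a:ℝ)+b+2)), pf a b s := by
  rcases lt_or_eq_of_le hab with h | h
  · exact upper_half_lt ha h
  · subst h
    have hμ : ((a:ℝ)+1)/((a:ℝ)+a+2) = 1/2 := by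
      rw [div_eq_div_iff (by positivity) (by norm_num)]
      ring
    rw [hμ]
    have hrefl : (∫ s in (0:ℝ)..(1/2:ℝ), pf a a s) = ∫ s in (1/2:ℝ)..1, pf a a s := by
      have := refl_int a a 0 (1/2)
      norm_num at this
      linarith [this]
    have := pf_split a a (1/2)
    linarith

lemma median_bracket {a b : ℕ} (ha : 1 ≤ a) (hb : 1 ≤ b) (hab : a ≤ b) {m : ℝ}
    (hm0 : 0 < m) (hm1 : m < 1)
    (hmed : 2 * (∫ s in (0:ℝ)..m, pf a b s) = ∫ s in (0:ℝ)..1, pf a b s) :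
    (a:ℝ)/((a:ℝ)+b) ≤ m ∧ m ≤ ((a:ℝ)+1)/((a:ℝ)+b+2) := by
  have haR : (1:ℝ) ≤ (a:ℝ) := by exact_mod_cast ha
  have hbR : (1:ℝ) ≤ (b:ℝ) := by exact_mod_cast hb
  constructor
  · by_contra hcon
    push_neg at hcon
    set M : ℝ := (a:ℝ)/((a:ℝ)+b) with hMdef
    have hM1 : M < 1 := by
      rw [hMdef, div_lt_one (by positivity)]; linarith
    have hpos : 0 < ∫ s in m..M, pf a b s :=
      pf_integral_pos a b hm0.le hcon hM1.le
    have hadd : (∫ s in (0:ℝ)..m, pf a b s) + (∫ s in m..M, pf a b s)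
        = ∫ s in (0:ℝ)..M, pf a b s :=
      intervalIntegral.integral_add_adjacent_intervals (pf_intble a b 0 m) (pf_intble a b m M)
    have := lower_half ha hab
    rw [← hMdef] at this
    linarith
  · by_contra hcon
    push_neg at hcon
    set μ : ℝ := ((a:ℝ)+1)/((a:ℝ)+b+2) with hμdef
    have hμ0 : 0 < μ := by positivity
    have hadd : (∫ s in (0:ℝ)..μ, pf a b s) + (∫ s in μ..m, pf a b s)
        = ∫ s in (0:ℝ)..m, pf a b s :=
      intervalIntegral.integral_add_adjacent_intervals (pf_intble a b 0 μ) (pf_intble a b μ m)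
    have hpos : 0 < ∫ s in μ..m, pf a b s :=
      pf_integral_pos a b hμ0.le hcon hm1.le
    have := upper_half ha hab
    rw [← hμdef] at this
    linarith

lemma numeric_bounds {n r : ℕ} (hr : 2 ≤ r) (hrn : r ≤ n - 1) :
    (((r:ℝ) - 1/3)/((n:ℝ)+1/3) - 1/((n:ℝ)+1) < ((r:ℝ)-1)/((n:ℝ)-1))
    ∧ (((r:ℝ)-1)/((n:ℝ)-1) < ((r:ℝ) - 1/3)/((n:ℝ)+1/3) + 1/((n:ℝ)+1))
    ∧ (((r:ℝ) - 1/3)/((n:ℝ)+1/3) - 1/((n:ℝ)+1) < (r:ℝ)/((n:ℝ)+1))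
    ∧ ((r:ℝ)/((n:ℝ)+1) < ((r:ℝ) - 1/3)/((n:ℝ)+1/3) + 1/((n:ℝ)+1)) := by
  have hn3 : 3 ≤ n := by omega
  have hn3R : (3:ℝ) ≤ (n:ℝ) := by exact_mod_cast hn3
  have hr2R : (2:ℝ) ≤ (r:ℝ) := by exact_mod_cast hr
  have hrnR : (r:ℝ) ≤ (n:ℝ) - 1 := by
    have : (r:ℝ) ≤ ((n-1 : ℕ):ℝ) := by exact_mod_cast hrn
    rwa [Nat.cast_sub (by omega), Nat.cast_one] at this
  have d1 : (0:ℝ) < (n:ℝ)+1/3 := by linarith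
  have d2 : (0:ℝ) < (n:ℝ)-1 := by linarith
  have d3 : (0:ℝ) < (n:ℝ)+1 := by linarith
  refine ⟨?_, ?_, ?_, ?_⟩
  · rw [sub_lt_iff_lt_add', ← sub_lt_iff_lt_add,
      div_sub_div _ _ (ne_of_gt d1) (ne_of_gt d2), div_lt_div_iff₀ (by positivity) d3]
    nlinarith [mul_nonneg (by linarith : (0:ℝ) ≤ (r:ℝ)-2) (by linarith : (0:ℝ) ≤ (n:ℝ)+1)]
  · rw [← sub_lt_iff_lt_add', div_sub_div _ _ (ne_of_gt d2) (ne_of_gt d1),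
      div_lt_div_iff₀ (by positivity) d3]
    nlinarith [mul_nonneg (by linarith : (0:ℝ) ≤ (n:ℝ)-1-(r:ℝ)) (by linarith : (0:ℝ) ≤ (n:ℝ)+1)]
  · rw [sub_lt_iff_lt_add', ← sub_lt_iff_lt_add,
      div_sub_div _ _ (ne_of_gt d1) (ne_of_gt d3), div_lt_div_iff₀ (by positivity) d3]
    nlinarith [mul_nonneg (by linarith : (0:ℝ) ≤ (n:ℝ)-1-(r:ℝ)) (by linarith : (0:ℝ) ≤ (n:ℝ)+1)]
  · rw [← sub_lt_iff_lt_add', div_sub_div _ _ (ne_of_gt d3) (ne_of_gt d1),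
      div_lt_div_iff₀ (by positivity) d3]
    nlinarith [mul_nonneg (by linarith : (0:ℝ) ≤ (r:ℝ)-2) (by linarith : (0:ℝ) ≤ (n:ℝ)+1)]

/-- For `2 ≤ r ≤ n-1`, the median `m` of the Beta(r, n-r+1) distribution, characterized by
`I_m(r, n-r+1) = 1/2`, satisfies the Hyndman–Fan approximation bound
`|m - (r - 1/3)/(n + 1/3)| < 1/(n+1)`. -/
theorem beta_median_hyndman_fan (n r : ℕ) (hr : 2 ≤ r) (hrn : r ≤ n - 1)
    (m : ℝ) (hm : m ∈ Set.Ioo (0:ℝ) 1)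
    (hmed : regIncBeta (r : ℝ) ((n : ℝ) - r + 1) m = 1 / 2) :
    |m - ((r : ℝ) - 1/3) / ((n : ℝ) + 1/3)| < 1 / ((n : ℝ) + 1) := by
  obtain ⟨hm0, hm1⟩ := hm
  have hn3 : 3 ≤ n := by omega
  set a := r - 1 with hadef
  set b := n - r with hbdef
  have ha1 : 1 ≤ a := by omega
  have hb1 : 1 ≤ b := by omega
  have haR : ((a:ℕ):ℝ) = (r:ℝ) - 1 := by
    rw [hadef, Nat.cast_sub (by omega : 1 ≤ r), Nat.cast_one]
  have hbR : ((b:ℕ):ℝ) = (n:ℝ) - r := by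
    rw [hbdef, Nat.cast_sub (by omega : r ≤ n)]
  have hconv : ∀ x y : ℝ, (∫ t in x..y, t ^ ((r:ℝ)-1) * (1-t) ^ ((n:ℝ) - (r:ℝ) + 1 - 1))
      = ∫ t in x..y, pf a b t := by
    intro x y
    apply intervalIntegral.integral_congr
    intro t _
    show t ^ ((r:ℝ)-1) * (1-t) ^ ((n:ℝ) - (r:ℝ) + 1 - 1) = pf a b t
    unfold pf
    rw [show (r:ℝ)-1 = ((a:ℕ):ℝ) by rw [haR],
      show (n:ℝ) - (r:ℝ) + 1 - 1 = ((b:ℕ):ℝ) by rw [hbR]; ring,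
      Real.rpow_natCast, Real.rpow_natCast]
  have hBpos : 0 < ∫ t in (0:ℝ)..1, pf a b t :=
    pf_integral_pos a b le_rfl zero_lt_one le_rfl
  have hmed' : 2 * (∫ s in (0:ℝ)..m, pf a b s) = ∫ s in (0:ℝ)..1, pf a b s := by
    unfold regIncBeta betaFun at hmed
    rw [hconv 0 m, hconv 0 1, div_eq_iff (ne_of_gt hBpos)] at hmed
    linarith
  obtain ⟨k1, k2, k3, k4⟩ := numeric_bounds hr hrn
  rw [abs_lt]
  have e1 : ((a:ℕ):ℝ)/(((a:ℕ):ℝ)+((b:ℕ):ℝ)) = ((r:ℝ)-1)/((n:ℝ)-1) := by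
    rw [haR, hbR]; congr 1; ring
  have e2 : (((a:ℕ):ℝ)+1)/(((a:ℕ):ℝ)+((b:ℕ):ℝ)+2) = (r:ℝ)/((n:ℝ)+1) := by
    rw [haR, hbR]; congr 1 <;> ring
  rcases le_total a b with hab | hab
  · obtain ⟨h1, h2⟩ := median_bracket ha1 hb1 hab hm0 hm1 hmed'
    rw [e1] at h1
    rw [e2] at h2
    constructor <;> linarith
  · have hswap0 : (∫ s in (0:ℝ)..(1-m), pf b a s) = ∫ s in m..1, pf a b s := by
      have := refl_int a b 0 (1-m)
      rw [show (1:ℝ)-(1-m) = m by ring, show (1:ℝ)-(0:ℝ) = 1 by ring] at this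
      exact this
    have hswap1 : (∫ s in (0:ℝ)..1, pf b a s) = ∫ s in (0:ℝ)..1, pf a b s := by
      have := refl_int a b 0 1
      rw [show (1:ℝ)-(1:ℝ) = 0 by ring, show (1:ℝ)-(0:ℝ) = 1 by ring] at this
      exact this
    have hmed'' : 2 * (∫ s in (0:ℝ)..(1-m), pf b a s) = ∫ s in (0:ℝ)..1, pf b a s := by
      rw [hswap0, hswap1]
      have := pf_split a b m
      linarith
    obtain ⟨h1, h2⟩ := median_bracket hb1 ha1 hab (by linarith : (0:ℝ) < 1-m)
      (by linarith : 1-m < 1) hmed''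
    have e3 : ((b:ℕ):ℝ)/(((b:ℕ):ℝ)+((a:ℕ):ℝ)) = ((n:ℝ)-r)/((n:ℝ)-1) := by
      rw [haR, hbR]; congr 1; ring
    have e4 : (((b:ℕ):ℝ)+1)/(((b:ℕ):ℝ)+((a:ℕ):ℝ)+2) = ((n:ℝ)+1-r)/((n:ℝ)+1) := by
      rw [haR, hbR]; congr 1 <;> ring
    rw [e3] at h1
    rw [e4] at h2
    have d2 : (0:ℝ) < (n:ℝ)-1 := by
      have : (3:ℝ) ≤ (n:ℝ) := by exact_mod_cast hn3
      linarith
    have d3 : (0:ℝ) < (n:ℝ)+1 := by positivity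
    have f1 : 1 - ((n:ℝ)+1-r)/((n:ℝ)+1) = (r:ℝ)/((n:ℝ)+1) := by
      field_simp
      ring
    have f2 : 1 - ((n:ℝ)-r)/((n:ℝ)-1) = ((r:ℝ)-1)/((n:ℝ)-1) := by
      rw [eq_div_iff (ne_of_gt d2)]
      field_simp
      ring
    constructor <;> nlinarith [h1, h2, k1, k2, k3, k4, f1, f2]
end

section
/- For the Plackett copula with parameter \theta > 0, \theta \ne 1, Spearman's rho equals \rho = (\theta+1)/(\theta-1) - 2\theta\log\theta/(\theta-1)^2, where \rho = 12\int_{[0,1]^2} C_\theta(u,v)\, du\, dv - 3. -/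
open MeasureTheory Filter

/-- The bivariate Plackett copula with parameter `θ` (`η = θ - 1`). -/
noncomputable def plackett (θ u v : ℝ) : ℝ :=
  (1 + (θ - 1) * (u + v)
      - Real.sqrt ((1 + (θ - 1) * (u + v)) ^ 2 - 4 * θ * (θ - 1) * u * v))
    / (2 * (θ - 1))

lemma plackett_inner (θ : ℝ) (hθ : 0 < θ) (hθ1 : θ ≠ 1) (u : ℝ)
    (hu0 : 0 < u) (hu1 : u < 1) :
    ∫ v in (0:ℝ)..1, plackett θ u v
      = (1 + (θ-1)*u + (θ-1)/2 - (θ+1)*(1-2*u+2*u^2)/2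
          - (2*θ/(θ-1))*(u*(1-u))*Real.log θ)/(2*(θ-1)) := by
  have hη : θ - 1 ≠ 0 := sub_ne_zero.mpr hθ1
  have hu1' : (0:ℝ) < 1 - u := by linarith
  have hm : (0:ℝ) < 4*θ*u*(1-u) := by positivity
  obtain ⟨p, hpdef⟩ : ∃ p : ℝ, p = (1 - (θ+1)*u)/(θ-1) := ⟨_, rfl⟩
  have hp : p * (θ-1) = 1 - (θ+1)*u := by rw [hpdef]; field_simp
  obtain ⟨s, hs, hs2⟩ : ∃ s : ℝ, 0 < s ∧ s^2 = 4*θ*u*(1-u) :=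
    ⟨Real.sqrt (4*θ*u*(1-u)), Real.sqrt_pos.mpr hm, Real.sq_sqrt hm.le⟩
  obtain ⟨q, hqdef⟩ : ∃ q : ℝ → ℝ,
      q = fun v => (1 + (θ-1)*(u+v))^2 - 4*θ*(θ-1)*u*v := ⟨_, rfl⟩
  have hq : ∀ v, q v = (θ-1)^2*(v+p)^2 + 4*θ*u*(1-u) := by
    intro v
    simp only [hqdef]
    linear_combination (-(θ-1)*(v+p) - (1 + (θ-1)*(u+v)) + 2*θ*u) * hp
  have hqpos : ∀ v, 0 < q v := by
    intro v; rw [hq v]; positivity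
  obtain ⟨F, hFdef⟩ : ∃ F : ℝ → ℝ, F = fun v =>
      ((1+(θ-1)*u)*v + (θ-1)*v^2/2
        - ((v+p)*Real.sqrt (q v)/2
            + ((4*θ*u*(1-u))/(2*(θ-1))) * Real.arsinh ((θ-1)*(v+p)/s)))/(2*(θ-1)) :=
    ⟨_, rfl⟩
  have hderiv : ∀ v ∈ Set.uIcc (0:ℝ) 1, HasDerivAt F (plackett θ u v) v := by
    intro v _
    have hQpos := hqpos v
    have hQpos' : 0 < Real.sqrt (q v) := Real.sqrt_pos.mpr hQpos
    have hQ : Real.sqrt (q v) ^ 2 = q v := Real.sq_sqrt hQpos.le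
    have hq' : HasDerivAt q (2*(θ-1)^2*(v+p)) v := by
      have h1 : HasDerivAt (fun w : ℝ => w + p) 1 v := (hasDerivAt_id v).add_const p
      have h2 := ((h1.pow 2).const_mul ((θ-1)^2)).add_const (4*θ*u*(1-u))
      have hfe : q = fun w : ℝ => (θ-1)^2*(w+p)^2 + 4*θ*u*(1-u) := funext hq
      rw [hfe]
      refine h2.congr_deriv ?_
      ring
    have hsq : HasDerivAt (fun w => Real.sqrt (q w))
        ((2*(θ-1)^2*(v+p)) / (2*Real.sqrt (q v))) v := hq'.sqrt hQpos.ne'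
    have hlin : HasDerivAt (fun w : ℝ => (θ-1)*(w+p)/s) ((θ-1)/s) v := by
      have h1 : HasDerivAt (fun w : ℝ => w + p) 1 v := (hasDerivAt_id v).add_const p
      have := (h1.const_mul (θ-1)).div_const s
      refine this.congr_deriv ?_
      ring
    have har : HasDerivAt (fun w => Real.arsinh ((θ-1)*(w+p)/s))
        ((Real.sqrt (1 + ((θ-1)*(v+p)/s)^2))⁻¹ * ((θ-1)/s)) v :=
      (Real.hasDerivAt_arsinh _).comp v hlin
    have hsqrt1 : Real.sqrt (1 + ((θ-1)*(v+p)/s)^2) = Real.sqrt (q v) / s := by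
      have h1 : 1 + ((θ-1)*(v+p)/s)^2 = q v / s^2 := by
        rw [hq v, hs2]; field_simp
        linear_combination (-(θ-1)^2*(v+p)^2) * hs2
      rw [h1, Real.sqrt_div hQpos.le, Real.sqrt_sq hs.le]
    have hF' : HasDerivAt F
        (((1+(θ-1)*u) + (θ-1)*v
          - ((Real.sqrt (q v) + (v+p)*((2*(θ-1)^2*(v+p)) / (2*Real.sqrt (q v))))/2
             + ((4*θ*u*(1-u))/(2*(θ-1)))
               * ((Real.sqrt (1 + ((θ-1)*(v+p)/s)^2))⁻¹ * ((θ-1)/s))))/(2*(θ-1))) v := by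
      rw [hFdef]
      have h1 : HasDerivAt (fun w : ℝ => (1+(θ-1)*u)*w) (1+(θ-1)*u) v := by
        simpa using (hasDerivAt_id v).const_mul (1+(θ-1)*u)
      have h2 : HasDerivAt (fun w : ℝ => (θ-1)*w^2/2) ((θ-1)*v) v := by
        have := ((hasDerivAt_pow 2 v).const_mul (θ-1)).div_const 2
        refine this.congr_deriv ?_
        ring
      have h3 : HasDerivAt (fun w : ℝ => (w+p)*Real.sqrt (q w))
          (Real.sqrt (q v) + (v+p)*((2*(θ-1)^2*(v+p)) / (2*Real.sqrt (q v)))) v := by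
        have := ((hasDerivAt_id v).add_const p).mul hsq
        simp only [id_eq] at this
        refine this.congr_deriv ?_
        ring
      exact (((h1.add h2).sub
        ((h3.div_const 2).add (har.const_mul ((4*θ*u*(1-u))/(2*(θ-1)))))).div_const (2*(θ-1)))
    have hbr : (Real.sqrt (q v) + (v+p)*((2*(θ-1)^2*(v+p)) / (2*Real.sqrt (q v))))/2
             + ((4*θ*u*(1-u))/(2*(θ-1)))
               * ((Real.sqrt (1 + ((θ-1)*(v+p)/s)^2))⁻¹ * ((θ-1)/s))
             = Real.sqrt (q v) := by
      rw [hsqrt1, inv_div]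
      have e2 : ((4*θ*u*(1-u))/(2*(θ-1))) * ((s / Real.sqrt (q v)) * ((θ-1)/s))
          = (4*θ*u*(1-u)) / (2*Real.sqrt (q v)) := by
        field_simp [hQpos'.ne', hs.ne']
      have e1 : (Real.sqrt (q v) + (v+p)*((2*(θ-1)^2*(v+p)) / (2*Real.sqrt (q v))))/2
          = (Real.sqrt (q v)^2 + (θ-1)^2*(v+p)^2)/(2*Real.sqrt (q v)) := by
        field_simp [hQpos'.ne']
      rw [e1, e2, ← add_div, div_eq_iff (by positivity : (2*Real.sqrt (q v)) ≠ 0)]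
      linear_combination -hQ - hq v
    rw [hbr] at hF'
    have hpl : plackett θ u v = ((1+(θ-1)*u) + (θ-1)*v - Real.sqrt (q v))/(2*(θ-1)) := by
      unfold plackett
      simp only [hqdef]
      ring_nf
    rw [hpl]
    exact hF'
  have hcont : Continuous (fun v => plackett θ u v) := by
    unfold plackett
    fun_prop
  rw [intervalIntegral.integral_eq_sub_of_hasDerivAt hderiv (hcont.intervalIntegrable 0 1)]
  -- endpoint values
  have hB : (0:ℝ) < θ - (θ-1)*u := by nlinarith
  have hA : (0:ℝ) < 1 + (θ-1)*u := by nlinarith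
  have hq1 : q 1 = (θ - (θ-1)*u)^2 := by simp only [hqdef]; ring
  have hq0 : q 0 = (1 + (θ-1)*u)^2 := by simp only [hqdef]; ring
  have hsq1 : Real.sqrt (q 1) = θ - (θ-1)*u := by rw [hq1, Real.sqrt_sq hB.le]
  have hsq0 : Real.sqrt (q 0) = 1 + (θ-1)*u := by rw [hq0, Real.sqrt_sq hA.le]
  have he1 : (θ-1)*(1+p) = θ - (θ+1)*u := by linear_combination hp
  have he0 : (θ-1)*(0+p) = 1 - (θ+1)*u := by linear_combination hp
  have har1 : Real.arsinh ((θ-1)*(1+p)/s) = Real.log (2*θ*(1-u)/s) := by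
    simp only [Real.arsinh]
    congr 1
    have h1 : (1:ℝ) + ((θ-1)*(1+p)/s)^2 = ((θ - (θ-1)*u)/s)^2 := by
      rw [div_pow, div_pow, he1, hs2]
      field_simp
      ring
    rw [h1, Real.sqrt_sq (div_nonneg hB.le hs.le), he1]
    field_simp
    ring
  have har0 : Real.arsinh ((θ-1)*(0+p)/s) = Real.log (2*(1-u)/s) := by
    simp only [Real.arsinh]
    congr 1
    have h1 : (1:ℝ) + ((θ-1)*(0+p)/s)^2 = ((1 + (θ-1)*u)/s)^2 := by
      rw [div_pow, div_pow, he0, hs2]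
      field_simp
      ring
    rw [h1, Real.sqrt_sq (div_nonneg hA.le hs.le), he0]
    field_simp
    ring
  have hlogdiff : Real.log (2*θ*(1-u)/s) - Real.log (2*(1-u)/s) = Real.log θ := by
    have h2 : 2*θ*(1-u)/s = θ * (2*(1-u)/s) := by ring
    rw [h2, Real.log_mul hθ.ne' (by positivity)]
    ring
  have hL : Real.log (2*θ*(1-u)/s) = Real.log θ + Real.log (2*(1-u)/s) := by
    linarith [hlogdiff]
  simp only [hFdef]
  rw [hsq1, hsq0, har1, har0, hL, hpdef]
  field_simp
  ring

/-- For the Plackett copula with `θ > 0`, `θ ≠ 1`, Spearman's rho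
`ρ = 12 ∫∫ C_θ(u,v) du dv - 3` equals `(θ+1)/(θ-1) - 2θ log θ/(θ-1)²`. -/
theorem plackett_spearman_rho (θ : ℝ) (hθ : 0 < θ) (hθ1 : θ ≠ 1) :
    12 * (∫ u in (0:ℝ)..1, ∫ v in (0:ℝ)..1, plackett θ u v) - 3
      = (θ + 1) / (θ - 1) - 2 * θ * Real.log θ / (θ - 1) ^ 2 := by
  have hη : θ - 1 ≠ 0 := sub_ne_zero.mpr hθ1
  have hcongr : (∫ u in (0:ℝ)..1, ∫ v in (0:ℝ)..1, plackett θ u v)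
      = ∫ u in (0:ℝ)..1,
          (1 + (θ-1)*u + (θ-1)/2 - (θ+1)*(1-2*u+2*u^2)/2
            - (2*θ/(θ-1))*(u*(1-u))*Real.log θ)/(2*(θ-1)) := by
    apply intervalIntegral.integral_congr_ae
    have hae : ∀ᵐ x : ℝ, x ≠ (1:ℝ) := by
      rw [ae_iff]
      simpa using Real.volume_singleton
    filter_upwards [hae] with x hx hmem
    rw [Set.uIoc_of_le (by norm_num : (0:ℝ) ≤ 1)] at hmem
    exact plackett_inner θ hθ hθ1 x hmem.1 (lt_of_le_of_ne hmem.2 hx)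
  rw [hcongr]
  obtain ⟨B0, hB0⟩ : ∃ B0 : ℝ, B0 = 1 + (θ-1)/2 - (θ+1)/2 := ⟨_, rfl⟩
  obtain ⟨B1, hB1⟩ : ∃ B1 : ℝ,
      B1 = (θ-1) + (θ+1) - (2*θ/(θ-1))*Real.log θ := ⟨_, rfl⟩
  obtain ⟨B2, hB2⟩ : ∃ B2 : ℝ,
      B2 = -(θ+1) + (2*θ/(θ-1))*Real.log θ := ⟨_, rfl⟩
  have hderiv : ∀ u ∈ Set.uIcc (0:ℝ) 1,
      HasDerivAt (fun u : ℝ => (B0*u + B1*u^2/2 + B2*u^3/3)/(2*(θ-1)))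
        ((1 + (θ-1)*u + (θ-1)/2 - (θ+1)*(1-2*u+2*u^2)/2
            - (2*θ/(θ-1))*(u*(1-u))*Real.log θ)/(2*(θ-1))) u := by
    intro u _
    have h0 : HasDerivAt (fun w : ℝ => B0*w) B0 u := by
      simpa using (hasDerivAt_id u).const_mul B0
    have h1 : HasDerivAt (fun w : ℝ => B1*w^2/2) (B1*u) u := by
      have := ((hasDerivAt_pow 2 u).const_mul B1).div_const 2
      refine this.congr_deriv ?_
      ring
    have h2 : HasDerivAt (fun w : ℝ => B2*w^3/3) (B2*u^2) u := by
      have := ((hasDerivAt_pow 3 u).const_mul B2).div_const 3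
      refine this.congr_deriv ?_
      ring
    have := ((h0.add h1).add h2).div_const (2*(θ-1))
    refine this.congr_deriv ?_
    rw [hB0, hB1, hB2]
    ring
  have hcont : Continuous (fun u : ℝ =>
      (1 + (θ-1)*u + (θ-1)/2 - (θ+1)*(1-2*u+2*u^2)/2
        - (2*θ/(θ-1))*(u*(1-u))*Real.log θ)/(2*(θ-1))) := by
    fun_prop
  rw [intervalIntegral.integral_eq_sub_of_hasDerivAt hderiv (hcont.intervalIntegrable 0 1)]
  rw [hB0, hB1, hB2]
  field_simp
  ring
end
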